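/- Let n > 3 be an odd integer divisible by 3. Then the class L_n contains no strictly non-commutative loop: for every integer m with 1 < m < n, gcd(m, n) = 1 and gcd(m − 1, n) = 1, there exist distinct residues i, j modulo n with m·j − (m−1)·i ≡ m·i − (m−1)·j (mod n). -/
import Mathlib


/-- If `3 ∣ n` then the class `Lₙ` contains no strictly non-commutative loop. -/
theorem stmt_3 (n : ℕ) (hn : 3 < n) (hodd : Odd n) (h3 : 3 ∣ n) :
    ∀ m : ℕ, 1 < m → m < n → Nat.gcd m n = 1 → Nat.gcd (m - 1) n = 1 →
      ∃ i j : ZMod n, i ≠ j ∧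
        (m : ZMod n) * j - ((m : ZMod n) - 1) * i
          = (m : ZMod n) * i - ((m : ZMod n) - 1) * j := by
  intro m hm1 hmn hg1 hg2
  have h3m : ¬ (3 ∣ m) := by
    intro h
    have := Nat.Coprime.eq_one_of_dvd (Nat.Coprime.coprime_dvd_left h hg1) h3
    omega
  have h3m1 : ¬ (3 ∣ (m - 1)) := by
    intro h
    have := Nat.Coprime.eq_one_of_dvd (Nat.Coprime.coprime_dvd_left h hg2) h3
    omega
  have h32m : 3 ∣ 2 * m - 1 := by
    have : m % 3 = 2 := by omega
    omega
  refine ⟨0, ((n / 3 : ℕ) : ZMod n), ?_, ?_⟩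
  · intro h
    have := (ZMod.natCast_eq_zero_iff (n / 3) n).mp h.symm
    have hlt : n / 3 < n := Nat.div_lt_self (by omega) (by omega)
    have hpos : 0 < n / 3 := Nat.div_pos (by omega) (by omega)
    have := Nat.le_of_dvd hpos this
    omega
  · have hcast : ((m : ZMod n) - 1) = ((m - 1 : ℕ) : ZMod n) := by
      push_cast [Nat.cast_sub (by omega : 1 ≤ m)]; ring
    rw [hcast]
    have key : ((2 * m - 1 : ℕ) : ZMod n) * ((n / 3 : ℕ) : ZMod n) = 0 := by
      rw [← Nat.cast_mul, ZMod.natCast_eq_zero_iff]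
      obtain ⟨t, ht⟩ := h32m
      obtain ⟨s, hs⟩ := h3
      refine ⟨t, ?_⟩
      rw [ht, hs]
      rw [Nat.mul_div_cancel_left s (by norm_num)]
      ring
    have : ((2 * m - 1 : ℕ) : ZMod n) = (m : ZMod n) + ((m - 1 : ℕ) : ZMod n) := by
      push_cast [Nat.cast_sub (by omega : 1 ≤ 2 * m), Nat.cast_sub (by omega : 1 ≤ m)]
      ring
    rw [this] at key
    linear_combination key
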